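/- Let Z be a finite additive group, let s ≥ 2 be an integer and let f : Z → ℝ. Then ‖f‖_{w^s(Z)} ≤ ‖f‖_{U^s(Z)}. If moreover |f(x)| ≤ 1 for all x ∈ Z, then ‖f‖_{U^s(Z)} ≤ (‖f‖_{w^s(Z)})^{1/2^s}. -/

import Mathlib

open Finset

/-- The average of a real-valued function on a finite type. -/
noncomputable def avg (α : Type*) [Fintype α] (f : α → ℝ) : ℝ :=
  (∑ x, f x) / (Fintype.card α : ℝ)

/-- The Gowers uniformity norm `‖f‖_{U^s(Z)}` of `f : Z → ℝ`. -/
noncomputable def gowersNorm (Z : Type*) [AddCommGroup Z] [Fintype Z] (s : ℕ) (f : Z → ℝ) : ℝ :=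
  (avg (Z × (Fin s → Z)) fun xh =>
      ∏ ω : Fin s → Bool, f (xh.1 + ∑ i, if ω i then xh.2 i else 0)) ^ (((2 : ℝ) ^ s)⁻¹)

/-- The weak uniformity norm `‖f‖_{w^s(Z)}` of `f : Z → ℝ`. -/
noncomputable def weakNorm (Z : Type*) [AddCommGroup Z] [Fintype Z] (s : ℕ) (f : Z → ℝ) : ℝ :=
  sSup {r : ℝ | ∃ h : (Fin s → Bool) → Z → ℝ,
    (∀ ω x, h ω x ∈ Set.Icc (-1 : ℝ) 1) ∧
    r = avg (Z × (Fin s → Z)) fun xh =>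
      f xh.1 * ∏ ω ∈ Finset.univ.filter (fun ω : Fin s → Bool => ω ≠ fun _ => false),
        h ω (xh.1 + ∑ i, if ω i then xh.2 i else 0)}

set_option linter.unusedSectionVars false
set_option linter.unusedVariables false
set_option maxHeartbeats 1000000

section AvgLemmas

variable {α β : Type*} [Fintype α] [Fintype β]

lemma avg_nonneg (f : α → ℝ) (h : ∀ x, 0 ≤ f x) : 0 ≤ avg α f :=
  div_nonneg (Finset.sum_nonneg fun x _ => h x) (Nat.cast_nonneg _)

lemma avg_le_one [Nonempty α] (f : α → ℝ) (h : ∀ x, f x ≤ 1) : avg α f ≤ 1 := by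
  have hc : (0:ℝ) < (Fintype.card α : ℝ) := by positivity
  rw [avg, div_le_one hc]
  calc ∑ x, f x ≤ ∑ _x : α, (1:ℝ) := Finset.sum_le_sum fun x _ => h x
    _ = (Fintype.card α : ℝ) := by simp

lemma avg_mono (f g : α → ℝ) (h : ∀ x, f x ≤ g x) : avg α f ≤ avg α g := by
  unfold avg
  rcases isEmpty_or_nonempty α with hα | hα
  · simp
  · have hc : (0:ℝ) < (Fintype.card α : ℝ) := by positivity
    exact div_le_div_of_nonneg_right (Finset.sum_le_sum fun x _ => h x) hc.le

lemma avg_equiv (e : β ≃ α) (f : α → ℝ) : avg α f = avg β fun b => f (e b) := by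
  unfold avg
  rw [Fintype.card_congr e, Fintype.sum_equiv e (fun b => f (e b)) f (fun b => rfl)]

lemma avg_prod (F : α × β → ℝ) : avg (α × β) F = avg α fun a => avg β fun b => F (a, b) := by
  unfold avg
  rw [Fintype.sum_prod_type, Fintype.card_prod]
  rw [show (∑ a : α, (∑ b : β, F (a,b)) / (Fintype.card β : ℝ)) = (∑ a : α, ∑ b : β, F (a,b)) / (Fintype.card β : ℝ) from (Finset.sum_div _ _ _).symm, div_div, Nat.cast_mul, mul_comm]

lemma avg_swap (F : α → β → ℝ) :
    (avg α fun a => avg β fun b => F a b) = avg β fun b => avg α fun a => F a b := by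
  unfold avg
  rw [show (∑ a : α, (∑ b : β, F a b) / (Fintype.card β : ℝ)) = (∑ a : α, ∑ b : β, F a b) / (Fintype.card β : ℝ) from (Finset.sum_div _ _ _).symm,
      show (∑ b : β, (∑ a : α, F a b) / (Fintype.card α : ℝ)) = (∑ b : β, ∑ a : α, F a b) / (Fintype.card α : ℝ) from (Finset.sum_div _ _ _).symm,
      div_div, div_div, Finset.sum_comm, mul_comm]

lemma avg_const_mul (c : ℝ) (f : α → ℝ) : (avg α fun x => c * f x) = c * avg α f := by
  unfold avg; rw [← Finset.mul_sum, mul_div_assoc]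

lemma avg_mul_const (c : ℝ) (f : α → ℝ) : (avg α fun x => f x * c) = avg α f * c := by
  unfold avg; rw [← Finset.sum_mul, div_mul_eq_mul_div]

lemma avg_sq_expand (f : α → ℝ) :
    (avg α f) ^ 2 = avg α fun x => avg α fun y => f x * f y := by
  unfold avg
  rw [show (∑ x : α, (∑ y : α, f x * f y) / (Fintype.card α : ℝ)) = (∑ x : α, ∑ y : α, f x * f y) / (Fintype.card α : ℝ) from (Finset.sum_div _ _ _).symm,
    div_div, div_pow, sq, Finset.sum_mul_sum]
  ring_nf

lemma avg_sq_le [Nonempty α] (f g : α → ℝ) :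
    (avg α fun x => f x * g x) ^ 2 ≤ (avg α fun x => f x ^ 2) * avg α fun x => g x ^ 2 := by
  have hc : (0:ℝ) < (Fintype.card α : ℝ) := by positivity
  unfold avg
  rw [div_pow, div_mul_div_comm, ← sq]
  apply div_le_div_of_nonneg_right ?_ (by positivity : (0:ℝ) ≤ _)
  exact Finset.sum_mul_sq_le_sq_mul_sq _ _ _

end AvgLemmas
section Cube

lemma prod_succ_bool {M : Type*} [CommMonoid M] {s : ℕ} (F : (Fin (s+1) → Bool) → M) :
    ∏ ω, F ω = ∏ ω : Fin s → Bool, F (Fin.cons false ω) * F (Fin.cons true ω) := by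
  rw [← (Fintype.prod_equiv (Fin.consEquiv fun _ => Bool) _ F (fun p => rfl) :
      (∏ p : Bool × (Fin s → Bool), F (Fin.cons p.1 p.2)) = _)]
  rw [Fintype.prod_prod_type]
  rw [Fintype.prod_bool fun b => ∏ y : Fin s → Bool, F (Fin.cons b y)]
  rw [Finset.prod_mul_distrib, mul_comm]

end Cube

section Holder

variable {α : Type*} [Fintype α] [Nonempty α]

lemma holder_pow : ∀ (s : ℕ) (c : (Fin s → Bool) → α → ℝ), (∀ ω k, 0 ≤ c ω k) →
    (avg α fun k => ∏ ω, c ω k) ^ (2^s) ≤ ∏ ω, avg α fun k => (c ω k)^(2^s) := by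
  intro s
  induction s with
  | zero =>
    intro c hc
    simp only [pow_zero, pow_one, Fintype.prod_unique]
    exact le_rfl
  | succ s ih =>
    intro c hc
    have key : (avg α fun k => ∏ ω, c ω k) =
        avg α fun k => (∏ ω : Fin s → Bool, c (Fin.cons false ω) k) *
          ∏ ω : Fin s → Bool, c (Fin.cons true ω) k := by
      apply congrArg
      funext k
      rw [prod_succ_bool fun ω => c ω k, Finset.prod_mul_distrib]
    rw [key]
    have h1 : ((avg α fun k => (∏ ω : Fin s → Bool, c (Fin.cons false ω) k) *
          ∏ ω : Fin s → Bool, c (Fin.cons true ω) k)) ^ (2^(s+1))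
        = (((avg α fun k => (∏ ω : Fin s → Bool, c (Fin.cons false ω) k) *
          ∏ ω : Fin s → Bool, c (Fin.cons true ω) k)) ^ 2) ^ (2^s) := by
      rw [← pow_mul, pow_succ, mul_comm (2^s) 2]
    rw [h1]
    calc (((avg α fun k => (∏ ω : Fin s → Bool, c (Fin.cons false ω) k) *
          ∏ ω : Fin s → Bool, c (Fin.cons true ω) k)) ^ 2) ^ (2^s)
        ≤ ((avg α fun k => (∏ ω : Fin s → Bool, c (Fin.cons false ω) k)^2) *
           avg α fun k => (∏ ω : Fin s → Bool, c (Fin.cons true ω) k)^2) ^ (2^s) := by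
          apply pow_le_pow_left₀ (sq_nonneg _)
          exact avg_sq_le _ _
      _ = ((avg α fun k => ∏ ω : Fin s → Bool, (c (Fin.cons false ω) k)^2) ^ (2^s)) *
          ((avg α fun k => ∏ ω : Fin s → Bool, (c (Fin.cons true ω) k)^2) ^ (2^s)) := by
          rw [mul_pow]
          congr 2 <;> (apply congrArg; funext k; rw [← Finset.prod_pow])
      _ ≤ (∏ ω : Fin s → Bool, avg α fun k => ((c (Fin.cons false ω) k)^2)^(2^s)) *
          (∏ ω : Fin s → Bool, avg α fun k => ((c (Fin.cons true ω) k)^2)^(2^s)) := by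
          apply mul_le_mul
          · exact ih _ (fun ω k => sq_nonneg _)
          · exact ih _ (fun ω k => sq_nonneg _)
          · apply pow_nonneg (avg_nonneg _ fun k => Finset.prod_nonneg fun ω _ => sq_nonneg _)
          · exact Finset.prod_nonneg fun ω _ => avg_nonneg _ fun k => pow_nonneg (sq_nonneg _) _
      _ = ∏ ω, avg α fun k => (c ω k)^(2^(s+1)) := by
          have e : ∀ ω : Fin (s+1) → Bool,
              (avg α fun k => ((c ω k)^2)^(2^s)) = avg α fun k => (c ω k)^(2^(s+1)) := by
            intro ω; apply congrArg; funext k; rw [← pow_mul, pow_succ, mul_comm (2^s) 2]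
          rw [prod_succ_bool fun ω => avg α fun k => (c ω k)^(2^(s+1)), Finset.prod_mul_distrib]
          rw [Finset.prod_congr rfl fun ω _ => e (Fin.cons false ω),
              Finset.prod_congr rfl fun ω _ => e (Fin.cons true ω)]

lemma holder_rpow (s : ℕ) (c : (Fin s → Bool) → α → ℝ) (hc : ∀ ω k, 0 ≤ c ω k) :
    (avg α fun k => ∏ ω, (c ω k) ^ (((2:ℝ)^s)⁻¹)) ≤
      ∏ ω, (avg α fun k => c ω k) ^ (((2:ℝ)^s)⁻¹) := by
  have hcast : ((2:ℝ)^s) = ((2^s : ℕ) : ℝ) := by push_cast; ring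
  have hn : (2^s : ℕ) ≠ 0 := by positivity
  set A := avg α fun k => ∏ ω, (c ω k) ^ (((2:ℝ)^s)⁻¹) with hA_def
  have hA : 0 ≤ A := avg_nonneg _ fun k => Finset.prod_nonneg fun ω _ =>
    Real.rpow_nonneg (hc ω k) _
  have hP : ∀ ω : Fin s → Bool, (0:ℝ) ≤ avg α fun k => c ω k :=
    fun ω => avg_nonneg _ fun k => hc ω k
  have step : A ^ (2^s : ℕ) ≤ ∏ ω, avg α fun k => c ω k := by
    calc A ^ (2^s : ℕ) ≤ ∏ ω, avg α fun k => ((c ω k) ^ (((2:ℝ)^s)⁻¹)) ^ (2^s : ℕ) :=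
          holder_pow s _ (fun ω k => Real.rpow_nonneg (hc ω k) _)
      _ = ∏ ω, avg α fun k => c ω k := by
          apply Finset.prod_congr rfl
          intro ω _
          apply congrArg
          funext k
          rw [hcast, Real.rpow_inv_natCast_pow (hc ω k) hn]
  calc A = (A ^ (2^s : ℕ)) ^ (((2:ℝ)^s)⁻¹) := by
        rw [hcast, Real.pow_rpow_inv_natCast hA hn]
    _ ≤ (∏ ω, avg α fun k => c ω k) ^ (((2:ℝ)^s)⁻¹) :=
        Real.rpow_le_rpow (pow_nonneg hA _) step (by positivity)
    _ = ∏ ω, (avg α fun k => c ω k) ^ (((2:ℝ)^s)⁻¹) :=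
        (Real.finset_prod_rpow _ _ (fun ω _ => hP ω) _).symm

end Holder

section Gowers

variable {Z : Type} [AddCommGroup Z] [Fintype Z]

/-- `ω · h`. -/
def dotW {s : ℕ} (ω : Fin s → Bool) (h : Fin s → Z) : Z := ∑ i, if ω i then h i else 0

/-- Product over the cube. -/
noncomputable def PHI {s : ℕ} (g : (Fin s → Bool) → Z → ℝ) (h : Fin s → Z) (x : Z) : ℝ :=
  ∏ ω, g ω (x + dotW ω h)

noncomputable def Ag (s : ℕ) (g : (Fin s → Bool) → Z → ℝ) (h : Fin s → Z) : ℝ :=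
  avg Z fun x => PHI g h x

noncomputable def Bg (s : ℕ) (g : (Fin s → Bool) → Z → ℝ) : ℝ :=
  avg (Fin s → Z) fun h => (Ag s g h)^2

noncomputable def GIP (s : ℕ) (g : (Fin s → Bool) → Z → ℝ) : ℝ :=
  avg (Z × (Fin s → Z)) fun xh => PHI g xh.2 xh.1

/-- The pairing of the even/odd parts of a family. -/
noncomputable def pairF {s : ℕ} (g : (Fin (s+1) → Bool) → Z → ℝ) (k : Z) :
    (Fin s → Bool) → Z → ℝ :=
  fun ω x => g (Fin.cons false ω) x * g (Fin.cons true ω) (x + k)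

noncomputable def evenF {s : ℕ} (g : (Fin (s+1) → Bool) → Z → ℝ) : (Fin s → Bool) → Z → ℝ :=
  fun ω => g (Fin.cons false ω)

noncomputable def oddF {s : ℕ} (g : (Fin (s+1) → Bool) → Z → ℝ) : (Fin s → Bool) → Z → ℝ :=
  fun ω => g (Fin.cons true ω)

noncomputable def dblF {s : ℕ} (G : (Fin s → Bool) → Z → ℝ) : (Fin (s+1) → Bool) → Z → ℝ :=
  fun ω => G (Fin.tail ω)

lemma dotW_cons {s : ℕ} (b : Bool) (ω : Fin s → Bool) (k : Z) (h : Fin s → Z) :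
    dotW (Fin.cons b ω) (Fin.cons k h) = (if b then k else 0) + dotW ω h := by
  unfold dotW
  rw [Fin.sum_univ_succ]
  simp [Fin.cons_zero, Fin.cons_succ]

lemma evenF_dblF {s : ℕ} (G : (Fin s → Bool) → Z → ℝ) : evenF (dblF G) = G := by
  funext ω; simp [evenF, dblF, Fin.tail_cons]

lemma oddF_dblF {s : ℕ} (G : (Fin s → Bool) → Z → ℝ) : oddF (dblF G) = G := by
  funext ω; simp [oddF, dblF, Fin.tail_cons]

lemma PHI_pair {s : ℕ} (g : (Fin (s+1) → Bool) → Z → ℝ) (k : Z) (h : Fin s → Z) (x : Z) :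
    PHI (pairF g k) h x = PHI (evenF g) h x * PHI (oddF g) h (x + k) := by
  unfold PHI pairF evenF oddF
  rw [← Finset.prod_mul_distrib]
  apply Finset.prod_congr rfl
  intro ω _
  congr 2
  abel

lemma PHI_cons {s : ℕ} (g : (Fin (s+1) → Bool) → Z → ℝ) (k : Z) (h : Fin s → Z) (x : Z) :
    PHI g (Fin.cons k h) x = PHI (pairF g k) h x := by
  unfold PHI pairF
  rw [prod_succ_bool fun ω => g ω (x + dotW ω (Fin.cons k h))]
  apply Finset.prod_congr rfl
  intro ω _
  rw [dotW_cons, dotW_cons]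
  norm_num
  left
  congr 1
  rw [add_comm k (dotW ω h), ← add_assoc]

lemma Ag_cons {s : ℕ} (g : (Fin (s+1) → Bool) → Z → ℝ) (k : Z) (h : Fin s → Z) :
    Ag (s+1) g (Fin.cons k h) = Ag s (pairF g k) h := by
  unfold Ag; exact congrArg _ (funext fun x => PHI_cons g k h x)

lemma avg_pi_cons {s : ℕ} (F : (Fin (s+1) → Z) → ℝ) :
    avg (Fin (s+1) → Z) F = avg Z fun k => avg (Fin s → Z) fun h => F (Fin.cons k h) := by
  rw [avg_equiv (Fin.consEquiv fun _ => Z) F, avg_prod]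
  rfl

lemma Bg_succ {s : ℕ} (g : (Fin (s+1) → Bool) → Z → ℝ) :
    Bg (s+1) g = avg Z fun k => Bg s (pairF g k) := by
  unfold Bg
  rw [avg_pi_cons fun h => (Ag (s+1) g h)^2]
  apply congrArg; funext k; apply congrArg; funext h
  rw [Ag_cons]

lemma GIP_eq_avg (s : ℕ) (g : (Fin s → Bool) → Z → ℝ) :
    GIP s g = avg (Fin s → Z) fun h => Ag s g h := by
  unfold GIP Ag
  rw [avg_prod fun xh : Z × (Fin s → Z) => PHI g xh.2 xh.1, avg_swap]

lemma avg_shift (G : Z → ℝ) (x : Z) : (avg Z fun k => G (x + k)) = avg Z G := by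
  rw [avg_equiv (Equiv.addLeft x) G]
  simp only [Equiv.coe_addLeft]

lemma avg_mul_shift (F G : Z → ℝ) :
    (avg Z fun k => avg Z fun x => F x * G (x + k)) = avg Z F * avg Z G := by
  rw [avg_swap fun k x => F x * G (x + k)]
  calc (avg Z fun x => avg Z fun k => F x * G (x + k))
      = avg Z fun x => F x * avg Z fun k => G (x + k) := by
        apply congrArg; funext x; rw [avg_const_mul]
    _ = avg Z fun x => F x * avg Z G := by
        apply congrArg; funext x; rw [avg_shift]
    _ = avg Z F * avg Z G := avg_mul_const _ _

lemma avg_corr_shift (G : Z → ℝ) (x y : Z) :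
    (avg Z fun k => G (x + k) * G (y + k)) = avg Z fun w => G w * G (w + (y - x)) := by
  rw [avg_equiv (Equiv.addLeft x) fun w => G w * G (w + (y - x))]
  apply congrArg; funext k
  simp only [Equiv.coe_addLeft]
  congr 2
  abel

lemma avg_sq_shift (F G : Z → ℝ) :
    (avg Z fun k => (avg Z fun x => F x * G (x + k))^2) =
      avg Z fun u => (avg Z fun x => F x * F (x + u)) * (avg Z fun x => G x * G (x + u)) := by
  calc (avg Z fun k => (avg Z fun x => F x * G (x + k))^2)
      = avg Z fun k => avg Z fun x => avg Z fun y =>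
          (F x * F y) * (G (x + k) * G (y + k)) := by
        apply congrArg; funext k
        rw [avg_sq_expand]
        apply congrArg; funext x; apply congrArg; funext y
        ring
    _ = avg Z fun x => avg Z fun y => avg Z fun k =>
          (F x * F y) * (G (x + k) * G (y + k)) := by
        rw [avg_swap fun k x => avg Z fun y => (F x * F y) * (G (x + k) * G (y + k))]
        apply congrArg; funext x
        rw [avg_swap fun k y => (F x * F y) * (G (x + k) * G (y + k))]
    _ = avg Z fun x => avg Z fun y =>
          (F x * F y) * avg Z fun w => G w * G (w + (y - x)) := by
        apply congrArg; funext x; apply congrArg; funext y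
        rw [avg_const_mul, avg_corr_shift]
    _ = avg Z fun x => avg Z fun u =>
          (F x * F (x + u)) * avg Z fun w => G w * G (w + u) := by
        apply congrArg; funext x
        rw [avg_equiv (Equiv.addLeft x) fun y => (F x * F y) * avg Z fun w => G w * G (w + (y - x))]
        apply congrArg; funext u
        simp only [Equiv.coe_addLeft, add_sub_cancel_left]
    _ = avg Z fun u => avg Z fun x =>
          (F x * F (x + u)) * avg Z fun w => G w * G (w + u) := by
        rw [avg_swap fun x u => (F x * F (x + u)) * avg Z fun w => G w * G (w + u)]
    _ = avg Z fun u => (avg Z fun x => F x * F (x + u)) * avg Z fun x => G x * G (x + u) := by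
        apply congrArg; funext u
        rw [avg_mul_const]

lemma Bg_nonneg (s : ℕ) (g : (Fin s → Bool) → Z → ℝ) : 0 ≤ Bg s g :=
  avg_nonneg _ fun h => sq_nonneg _

lemma Ag_pair_avg {s : ℕ} (g : (Fin (s+1) → Bool) → Z → ℝ) (h : Fin s → Z) :
    (avg Z fun k => Ag s (pairF g k) h) = Ag s (evenF g) h * Ag s (oddF g) h := by
  have e : ∀ k, Ag s (pairF g k) h =
      avg Z fun x => PHI (evenF g) h x * PHI (oddF g) h (x + k) := by
    intro k
    unfold Ag
    apply congrArg; funext x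
    exact PHI_pair g k h x
  calc (avg Z fun k => Ag s (pairF g k) h)
      = avg Z fun k => avg Z fun x => PHI (evenF g) h x * PHI (oddF g) h (x + k) := by
        apply congrArg; funext k; exact e k
    _ = (avg Z fun x => PHI (evenF g) h x) * avg Z fun x => PHI (oddF g) h x :=
        avg_mul_shift _ _
    _ = Ag s (evenF g) h * Ag s (oddF g) h := rfl

lemma GIP_succ {s : ℕ} (g : (Fin (s+1) → Bool) → Z → ℝ) :
    GIP (s+1) g = avg (Fin s → Z) fun h => Ag s (evenF g) h * Ag s (oddF g) h := by
  rw [GIP_eq_avg, avg_pi_cons fun h => Ag (s+1) g h]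
  calc (avg Z fun k => avg (Fin s → Z) fun h => Ag (s+1) g (Fin.cons k h))
      = avg Z fun k => avg (Fin s → Z) fun h => Ag s (pairF g k) h := by
        apply congrArg; funext k; apply congrArg; funext h; exact Ag_cons g k h
    _ = avg (Fin s → Z) fun h => avg Z fun k => Ag s (pairF g k) h :=
        avg_swap fun k h => Ag s (pairF g k) h
    _ = avg (Fin s → Z) fun h => Ag s (evenF g) h * Ag s (oddF g) h := by
        apply congrArg; funext h; exact Ag_pair_avg g h

lemma GIP_const_eq_Bg {s : ℕ} (f : Z → ℝ) :
    GIP (s+1) (fun _ => f) = Bg s (fun _ => f) := by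
  rw [GIP_succ]
  unfold Bg
  apply congrArg; funext h
  rw [sq]
  rfl

lemma pairF_dblF {s : ℕ} (G : (Fin s → Bool) → Z → ℝ) (k : Z) :
    pairF (dblF G) k = fun ω x => G ω x * G ω (x + k) := by
  funext ω x
  unfold pairF dblF
  rw [Fin.tail_cons, Fin.tail_cons]

lemma L3 {s : ℕ} (g : (Fin (s+1) → Bool) → Z → ℝ) (h : Fin s → Z) :
    (avg Z fun k => (Ag s (pairF g k) h)^2) =
      avg Z fun u => Ag s (pairF (dblF (evenF g)) u) h * Ag s (pairF (dblF (oddF g)) u) h := by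
  have e : ∀ (g' : (Fin (s+1) → Bool) → Z → ℝ) (k : Z), Ag s (pairF g' k) h =
      avg Z fun x => PHI (evenF g') h x * PHI (oddF g') h (x + k) := by
    intro g' k
    unfold Ag
    apply congrArg; funext x
    exact PHI_pair g' k h x
  calc (avg Z fun k => (Ag s (pairF g k) h)^2)
      = avg Z fun k => (avg Z fun x => PHI (evenF g) h x * PHI (oddF g) h (x + k))^2 := by
        apply congrArg; funext k; rw [e g k]
    _ = avg Z fun u => (avg Z fun x => PHI (evenF g) h x * PHI (evenF g) h (x + u)) *
          avg Z fun x => PHI (oddF g) h x * PHI (oddF g) h (x + u) :=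
        avg_sq_shift _ _
    _ = avg Z fun u => Ag s (pairF (dblF (evenF g)) u) h * Ag s (pairF (dblF (oddF g)) u) h := by
        apply congrArg; funext u
        rw [e (dblF (evenF g)) u, e (dblF (oddF g)) u, evenF_dblF, oddF_dblF,
          evenF_dblF, oddF_dblF]

lemma Bg_sq_le {s : ℕ} (g : (Fin (s+1) → Bool) → Z → ℝ) :
    (Bg (s+1) g)^2 ≤ Bg (s+1) (dblF (evenF g)) * Bg (s+1) (dblF (oddF g)) := by
  have expand : ∀ (G : (Fin s → Bool) → Z → ℝ),
      Bg (s+1) (dblF G) = avg ((Fin s → Z) × Z) fun p => (Ag s (pairF (dblF G) p.2) p.1)^2 := by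
    intro G
    calc Bg (s+1) (dblF G) = avg Z fun k => Bg s (pairF (dblF G) k) := Bg_succ _
      _ = avg Z fun k => avg (Fin s → Z) fun h => (Ag s (pairF (dblF G) k) h)^2 := rfl
      _ = avg (Fin s → Z) fun h => avg Z fun k => (Ag s (pairF (dblF G) k) h)^2 :=
          avg_swap fun k h => (Ag s (pairF (dblF G) k) h)^2
      _ = avg ((Fin s → Z) × Z) fun p => (Ag s (pairF (dblF G) p.2) p.1)^2 :=
          (avg_prod fun p : (Fin s → Z) × Z => (Ag s (pairF (dblF G) p.2) p.1)^2).symm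
  have main : Bg (s+1) g = avg ((Fin s → Z) × Z) fun p =>
      Ag s (pairF (dblF (evenF g)) p.2) p.1 * Ag s (pairF (dblF (oddF g)) p.2) p.1 := by
    calc Bg (s+1) g = avg Z fun k => Bg s (pairF g k) := Bg_succ g
      _ = avg Z fun k => avg (Fin s → Z) fun h => (Ag s (pairF g k) h)^2 := rfl
      _ = avg (Fin s → Z) fun h => avg Z fun k => (Ag s (pairF g k) h)^2 :=
          avg_swap fun k h => (Ag s (pairF g k) h)^2
      _ = avg (Fin s → Z) fun h => avg Z fun u =>
            Ag s (pairF (dblF (evenF g)) u) h * Ag s (pairF (dblF (oddF g)) u) h := by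
          apply congrArg; funext h; exact L3 g h
      _ = avg ((Fin s → Z) × Z) fun p =>
            Ag s (pairF (dblF (evenF g)) p.2) p.1 * Ag s (pairF (dblF (oddF g)) p.2) p.1 :=
          (avg_prod fun p : (Fin s → Z) × Z =>
            Ag s (pairF (dblF (evenF g)) p.2) p.1 * Ag s (pairF (dblF (oddF g)) p.2) p.1).symm
  rw [main, expand (evenF g), expand (oddF g)]
  exact avg_sq_le _ _

theorem Bg_le_prod : ∀ (s : ℕ) (g : (Fin s → Bool) → Z → ℝ),
    Bg s g ≤ ∏ ω, (Bg s fun _ => g ω) ^ (((2:ℝ)^s)⁻¹) := by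
  intro s
  induction s with
  | zero =>
    intro g
    have hg : g = fun _ => g (fun _ => false) :=
      funext fun ω => congrArg g (Subsingleton.elim _ _)
    simp only [pow_zero, inv_one, Real.rpow_one]
    rw [Fintype.prod_subsingleton (fun ω : Fin 0 → Bool => Bg 0 fun _ => g ω) (fun _ => false)]
    conv_lhs => rw [hg]
  | succ s ih =>
    intro g
    set θ : ℝ := ((2:ℝ)^s)⁻¹ with hθ
    have h2 : ∀ (G : (Fin s → Bool) → Z → ℝ),
        Bg (s+1) (dblF G) ≤ ∏ ω : Fin s → Bool, (Bg (s+1) fun _ => G ω) ^ θ := by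
      intro G
      rw [Bg_succ]
      calc avg Z (fun k => Bg s (pairF (dblF G) k))
          ≤ avg Z fun k => ∏ ω, (Bg s fun _ => pairF (dblF G) k ω) ^ θ :=
            avg_mono _ _ fun k => ih (pairF (dblF G) k)
        _ ≤ ∏ ω : Fin s → Bool, (avg Z fun k => Bg s fun _ => pairF (dblF G) k ω) ^ θ :=
            holder_rpow s (fun ω k => Bg s fun _ => pairF (dblF G) k ω)
              (fun ω k => Bg_nonneg _ _)
        _ = ∏ ω : Fin s → Bool, (Bg (s+1) fun _ => G ω) ^ θ := by
            apply Finset.prod_congr rfl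
            intro ω _
            congr 1
            rw [Bg_succ (fun _ => G ω)]
            apply congrArg; funext k
            apply congrArg
            rw [pairF_dblF]
            funext ω'' x
            rfl
    have hBe := h2 (evenF g)
    have hBo := h2 (oddF g)
    have hsq : (Bg (s+1) g)^2 ≤ ∏ ω : Fin (s+1) → Bool, (Bg (s+1) fun _ => g ω) ^ θ := by
      calc (Bg (s+1) g)^2 ≤ Bg (s+1) (dblF (evenF g)) * Bg (s+1) (dblF (oddF g)) := Bg_sq_le g
        _ ≤ (∏ ω : Fin s → Bool, (Bg (s+1) fun _ => evenF g ω) ^ θ) *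
            ∏ ω : Fin s → Bool, (Bg (s+1) fun _ => oddF g ω) ^ θ := by
            apply mul_le_mul hBe hBo (Bg_nonneg _ _)
            exact Finset.prod_nonneg fun ω _ => Real.rpow_nonneg (Bg_nonneg _ _) _
        _ = ∏ ω : Fin (s+1) → Bool, (Bg (s+1) fun _ => g ω) ^ θ := by
            rw [prod_succ_bool fun ω : Fin (s+1) → Bool => (Bg (s+1) fun _ => g ω) ^ θ,
              Finset.prod_mul_distrib]
            rfl
    have hB : (0:ℝ) ≤ Bg (s+1) g := Bg_nonneg _ _
    have h2ne : ((2:ℕ)) ≠ 0 := two_ne_zero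
    calc Bg (s+1) g = ((Bg (s+1) g)^(2:ℕ)) ^ (((2:ℕ):ℝ))⁻¹ :=
          (Real.pow_rpow_inv_natCast hB h2ne).symm
      _ ≤ (∏ ω : Fin (s+1) → Bool, (Bg (s+1) fun _ => g ω) ^ θ) ^ (((2:ℕ):ℝ))⁻¹ := by
          apply Real.rpow_le_rpow (by positivity) _ (by positivity)
          exact_mod_cast hsq
      _ = ∏ ω : Fin (s+1) → Bool, ((Bg (s+1) fun _ => g ω) ^ θ) ^ (((2:ℕ):ℝ))⁻¹ :=
          (Real.finset_prod_rpow _ _ (fun ω _ => Real.rpow_nonneg (Bg_nonneg _ _) _) _).symm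
      _ = ∏ ω : Fin (s+1) → Bool, (Bg (s+1) fun _ => g ω) ^ (((2:ℝ)^(s+1))⁻¹) := by
          apply Finset.prod_congr rfl
          intro ω _
          rw [← Real.rpow_mul (Bg_nonneg _ _)]
          congr 1
          rw [hθ, ← mul_inv]
          norm_num [pow_succ]

lemma GIP_const_nonneg (t : ℕ) (f : Z → ℝ) : 0 ≤ GIP (t+1) (fun _ => f) := by
  rw [GIP_const_eq_Bg]
  exact Bg_nonneg _ _

lemma GIP_const_le_one (s : ℕ) (φ : Z → ℝ) (hφ : ∀ x, |φ x| ≤ 1) :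
    GIP s (fun _ => φ) ≤ 1 := by
  haveI : Nonempty Z := ⟨0⟩
  apply avg_le_one
  intro xh
  calc PHI (fun _ => φ) xh.2 xh.1 ≤ |PHI (fun _ => φ) xh.2 xh.1| := le_abs_self _
    _ = ∏ ω, |φ (xh.1 + dotW ω xh.2)| := by rw [PHI, Finset.abs_prod]
    _ ≤ 1 := Finset.prod_le_one (fun ω _ => abs_nonneg _) (fun ω _ => hφ _)

lemma GIP_abs_le (t : ℕ) (g : (Fin (t+1) → Bool) → Z → ℝ) :
    |GIP (t+1) g| ≤ ∏ ω, (GIP (t+1) fun _ => g ω) ^ (((2:ℝ)^(t+1))⁻¹) := by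
  set θ : ℝ := ((2:ℝ)^t)⁻¹ with hθ
  have hsq : (GIP (t+1) g)^2 ≤ Bg t (evenF g) * Bg t (oddF g) := by
    rw [GIP_succ]
    exact avg_sq_le (fun h => Ag t (evenF g) h) (fun h => Ag t (oddF g) h)
  have hprodθ : (GIP (t+1) g)^2 ≤ ∏ ω : Fin (t+1) → Bool, (GIP (t+1) fun _ => g ω) ^ θ := by
    calc (GIP (t+1) g)^2 ≤ Bg t (evenF g) * Bg t (oddF g) := hsq
      _ ≤ (∏ ω : Fin t → Bool, (Bg t fun _ => evenF g ω) ^ θ) *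
          ∏ ω : Fin t → Bool, (Bg t fun _ => oddF g ω) ^ θ := by
          apply mul_le_mul (Bg_le_prod t (evenF g)) (Bg_le_prod t (oddF g)) (Bg_nonneg _ _)
          exact Finset.prod_nonneg fun ω _ => Real.rpow_nonneg (Bg_nonneg _ _) _
      _ = ∏ ω : Fin (t+1) → Bool, (Bg t fun _ => g ω) ^ θ := by
          rw [prod_succ_bool fun ω : Fin (t+1) → Bool => (Bg t (fun _ => g ω)) ^ θ,
            Finset.prod_mul_distrib]
          rfl
      _ = ∏ ω : Fin (t+1) → Bool, (GIP (t+1) fun _ => g ω) ^ θ := by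
          apply Finset.prod_congr rfl
          intro ω _
          rw [GIP_const_eq_Bg]
  have habs : |GIP (t+1) g| ^ (2:ℕ) = (GIP (t+1) g)^2 := sq_abs _
  calc |GIP (t+1) g| = (|GIP (t+1) g| ^ (2:ℕ)) ^ (((2:ℕ):ℝ))⁻¹ :=
        (Real.pow_rpow_inv_natCast (abs_nonneg _) two_ne_zero).symm
    _ ≤ (∏ ω : Fin (t+1) → Bool, (GIP (t+1) fun _ => g ω) ^ θ) ^ (((2:ℕ):ℝ))⁻¹ := by
        apply Real.rpow_le_rpow (by positivity) _ (by positivity)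
        rw [habs]; exact hprodθ
    _ = ∏ ω : Fin (t+1) → Bool, ((GIP (t+1) fun _ => g ω) ^ θ) ^ (((2:ℕ):ℝ))⁻¹ :=
        (Real.finset_prod_rpow _ _
          (fun ω _ => Real.rpow_nonneg (GIP_const_nonneg t _) _) _).symm
    _ = ∏ ω : Fin (t+1) → Bool, (GIP (t+1) fun _ => g ω) ^ (((2:ℝ)^(t+1))⁻¹) := by
        apply Finset.prod_congr rfl
        intro ω _
        rw [← Real.rpow_mul (GIP_const_nonneg t _)]
        congr 1
        rw [hθ, ← mul_inv]
        norm_num [pow_succ]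

end Gowers

section Final

variable {Z : Type} [AddCommGroup Z] [Fintype Z]

noncomputable def gowersNorm' (Z : Type) [AddCommGroup Z] [Fintype Z] (s : ℕ) (f : Z → ℝ) : ℝ :=
  (avg (Z × (Fin s → Z)) fun xh =>
      ∏ ω : Fin s → Bool, f (xh.1 + ∑ i, if ω i then xh.2 i else 0)) ^ (((2 : ℝ) ^ s)⁻¹)

lemma gowersNorm'_eq (s : ℕ) (f : Z → ℝ) :
    gowersNorm' Z s f = (GIP s fun _ => f) ^ (((2 : ℝ) ^ s)⁻¹) := rfl

lemma weak_term_eq (s : ℕ) (f : Z → ℝ) (h : (Fin s → Bool) → Z → ℝ) :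
    (avg (Z × (Fin s → Z)) fun xh =>
      f xh.1 * ∏ ω ∈ Finset.univ.filter (fun ω : Fin s → Bool => ω ≠ fun _ => false),
        h ω (xh.1 + ∑ i, if ω i then xh.2 i else 0)) =
    GIP s (fun ω => if ω = (fun _ => false) then f else h ω) := by
  apply congrArg
  funext xh
  show _ = ∏ ω, (fun ω => if ω = (fun _ => false) then f else h ω) ω (xh.1 + dotW ω xh.2)
  rw [← Finset.mul_prod_erase Finset.univ _ (Finset.mem_univ (fun _ : Fin s => false))]
  congr 1
  · simp
    congr 1
    rw [show dotW (fun _ : Fin s => false) xh.2 = 0 by simp [dotW], add_zero]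
  · rw [Finset.filter_ne']
    apply Finset.prod_congr rfl
    intro ω hω
    simp only [if_neg (Finset.ne_of_mem_erase hω)]
    rfl

theorem final_stmt (s : ℕ) (hs : 2 ≤ s) (f : Z → ℝ)
    (S : Set ℝ)
    (hS : S = {r : ℝ | ∃ h : (Fin s → Bool) → Z → ℝ,
      (∀ ω x, h ω x ∈ Set.Icc (-1 : ℝ) 1) ∧
      r = avg (Z × (Fin s → Z)) fun xh =>
        f xh.1 * ∏ ω ∈ Finset.univ.filter (fun ω : Fin s → Bool => ω ≠ fun _ => false),
          h ω (xh.1 + ∑ i, if ω i then xh.2 i else 0)}) :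
    sSup S ≤ gowersNorm' Z s f ∧
    ((∀ x, |f x| ≤ 1) → gowersNorm' Z s f ≤ (sSup S) ^ (((2 : ℝ) ^ s)⁻¹)) := by
  obtain ⟨t, rfl⟩ : ∃ t, s = t + 1 := ⟨s - 1, by omega⟩
  haveI : Nonempty Z := ⟨0⟩
  have hgn : 0 ≤ gowersNorm' Z (t+1) f := by
    rw [gowersNorm'_eq]
    exact Real.rpow_nonneg (GIP_const_nonneg t f) _
  constructor
  · apply Real.sSup_le _ hgn
    intro r hr
    rw [hS] at hr
    obtain ⟨h, hb, rfl⟩ := hr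
    rw [weak_term_eq (t+1) f h]
    set g : (Fin (t+1) → Bool) → Z → ℝ :=
      fun ω => if ω = (fun _ => false) then f else h ω with hg
    calc GIP (t+1) g ≤ |GIP (t+1) g| := le_abs_self _
      _ ≤ ∏ ω, (GIP (t+1) fun _ => g ω) ^ (((2:ℝ)^(t+1))⁻¹) := GIP_abs_le t g
      _ = (GIP (t+1) fun _ => g (fun _ => false)) ^ (((2:ℝ)^(t+1))⁻¹) *
          ∏ ω ∈ Finset.univ.erase (fun _ : Fin (t+1) => false),
            (GIP (t+1) fun _ => g ω) ^ (((2:ℝ)^(t+1))⁻¹) :=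
          (Finset.mul_prod_erase Finset.univ _ (Finset.mem_univ _)).symm
      _ ≤ gowersNorm' Z (t+1) f * 1 := by
          apply mul_le_mul _ _ (Finset.prod_nonneg fun ω _ =>
            Real.rpow_nonneg (GIP_const_nonneg t _) _) hgn
          · have hg0 : g (fun _ => false) = f := by
              rw [hg]
              simp
            rw [gowersNorm'_eq, hg0]
          · apply Finset.prod_le_one
            · intro ω _; exact Real.rpow_nonneg (GIP_const_nonneg t _) _
            · intro ω hω
              apply Real.rpow_le_one (GIP_const_nonneg t _) _ (by positivity)
              apply GIP_const_le_one
              intro x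
              rw [hg]
              simp only [if_neg (Finset.ne_of_mem_erase hω)]
              have := hb ω x
              rw [Set.mem_Icc] at this
              exact abs_le.mpr this
      _ = gowersNorm' Z (t+1) f := mul_one _
  · intro hf
    have hmem : GIP (t+1) (fun _ => f) ∈ S := by
      rw [hS]
      refine ⟨fun _ => f, fun ω x => Set.mem_Icc.mpr (abs_le.mp (hf x)), ?_⟩
      rw [weak_term_eq (t+1) f (fun _ => f)]
      congr 1
      funext ω
      exact (ite_self f).symm
    have hbdd : BddAbove S := by
      refine ⟨1, ?_⟩
      rintro r hr
      rw [hS] at hr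
      obtain ⟨h, hb, rfl⟩ := hr
      apply avg_le_one
      intro xh
      calc f xh.1 * ∏ ω ∈ Finset.univ.filter (fun ω : Fin (t+1) → Bool => ω ≠ fun _ => false),
              h ω (xh.1 + ∑ i, if ω i then xh.2 i else 0)
          ≤ |f xh.1 * ∏ ω ∈ Finset.univ.filter
              (fun ω : Fin (t+1) → Bool => ω ≠ fun _ => false),
              h ω (xh.1 + ∑ i, if ω i then xh.2 i else 0)| := le_abs_self _
        _ = |f xh.1| * |∏ ω ∈ Finset.univ.filter
              (fun ω : Fin (t+1) → Bool => ω ≠ fun _ => false),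
              h ω (xh.1 + ∑ i, if ω i then xh.2 i else 0)| := abs_mul _ _
        _ ≤ 1 := by
            apply mul_le_one₀ (hf _) (abs_nonneg _)
            rw [Finset.abs_prod]
            apply Finset.prod_le_one (fun ω _ => abs_nonneg _)
            intro ω _
            have := hb ω (xh.1 + ∑ i, if ω i then xh.2 i else 0)
            rw [Set.mem_Icc] at this
            exact abs_le.mpr this
    have hle : GIP (t+1) (fun _ => f) ≤ sSup S := le_csSup hbdd hmem
    rw [gowersNorm'_eq]
    exact Real.rpow_le_rpow (GIP_const_nonneg t f) hle (by positivity)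

end Final

theorem stmt18 (Z : Type) [AddCommGroup Z] [Fintype Z] (s : ℕ) (hs : 2 ≤ s) (f : Z → ℝ) :
    weakNorm Z s f ≤ gowersNorm Z s f ∧
    ((∀ x, |f x| ≤ 1) → gowersNorm Z s f ≤ (weakNorm Z s f) ^ (((2 : ℝ) ^ s)⁻¹)) := by
  exact final_stmt s hs f _ rfl
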